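/- Fix n points and k ≥ 1. In the k-nearest-neighbor setting with randomized tie-breaking (each point Xⱼ augmented with an independent Uniform[0,1] variable Zⱼ used to break ties), no augmented point (Xᵢ, Zᵢ) can be the nearest neighbor (under the randomized tie-breaking order) of more than γ_d + 2 of the remaining points, where γ_d is the maximum number of distinct points in ℝ^d that can share the same nearest neighbor; moreover γ_d ≤ 3^d − 1. -/

import Mathlib

open Metric MeasureTheory Set ENNReal RealInnerProductSpace

section DWaux

lemma dw_packing (d m : ℕ) (hd : 0 < d) (u : Fin m → EuclideanSpace ℝ (Fin d))
    (hnorm : ∀ a, ‖u a‖ = 1)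
    (hdist : ∀ a b : Fin m, a ≠ b → 1 ≤ dist (u a) (u b)) :
    m + 1 ≤ 3 ^ d := by
  haveI : Nontrivial (EuclideanSpace ℝ (Fin d)) := by
    apply Module.nontrivial_of_finrank_pos (R := ℝ)
    rw [finrank_euclideanSpace_fin]; exact hd
  set μ : Measure (EuclideanSpace ℝ (Fin d)) := volume with hμ
  set w : Fin (m+1) → EuclideanSpace ℝ (Fin d) := Fin.cons 0 u with hw
  have hwd : ∀ a b : Fin (m+1), a ≠ b → 1 ≤ dist (w a) (w b) := by
    intro a b hab
    induction a using Fin.cases with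
    | zero =>
      induction b using Fin.cases with
      | zero => exact absurd rfl hab
      | succ b => simp [hw, Fin.cons_zero, Fin.cons_succ, dist_zero_left, hnorm b]
    | succ a =>
      induction b using Fin.cases with
      | zero => simp [hw, Fin.cons_zero, Fin.cons_succ, dist_zero_right, hnorm a]
      | succ b =>
        have hab' : a ≠ b := fun h => hab (by rw [h])
        simpa [hw, Fin.cons_succ] using hdist a b hab'
  have hdisj : Pairwise (Function.onFun Disjoint fun a => ball (w a) 2⁻¹) := by
    intro a b hab
    exact ball_disjoint_ball (by rw [show (2:ℝ)⁻¹ + 2⁻¹ = 1 by norm_num]; exact hwd a b hab)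
  have hmeas := measure_iUnion (μ := μ) hdisj (fun a => measurableSet_ball)
  have hsub : (⋃ a, ball (w a) 2⁻¹) ⊆ closedBall (0 : EuclideanSpace ℝ (Fin d)) (3/2) := by
    intro y hy
    simp only [mem_iUnion, mem_ball] at hy
    obtain ⟨a, ha⟩ := hy
    rw [mem_closedBall, dist_zero_right]
    have h1 : ‖w a‖ ≤ 1 := by
      induction a using Fin.cases with
      | zero => simp [hw]
      | succ a => simp [hw, Fin.cons_succ, hnorm a]
    calc ‖y‖ ≤ ‖y - w a‖ + ‖w a‖ := by simpa using norm_add_le (y - w a) (w a)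
    _ ≤ 2⁻¹ + 1 := by
        have := ha; rw [dist_eq_norm] at this
        exact add_le_add this.le h1
    _ ≤ 3/2 := by norm_num
  have hle : μ (⋃ a, ball (w a) 2⁻¹) ≤ μ (closedBall (0 : EuclideanSpace ℝ (Fin d)) (3/2)) :=
    measure_mono hsub
  rw [hmeas] at hle
  have hcent : ∀ a : Fin (m+1), μ (ball (w a) 2⁻¹)
      = μ (ball (0 : EuclideanSpace ℝ (Fin d)) 2⁻¹) := fun a =>
    Measure.addHaar_ball_center μ _ _
  rw [tsum_fintype] at hle
  simp only [hcent, Finset.sum_const, Finset.card_univ, Fintype.card_fin, nsmul_eq_mul] at hle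
  rw [Measure.addHaar_ball_of_pos μ _ (by norm_num : (0:ℝ) < 2⁻¹),
    Measure.addHaar_closedBall μ _ (by norm_num : (0:ℝ) ≤ 3/2), finrank_euclideanSpace_fin]
    at hle
  have hV0 : μ (ball (0 : EuclideanSpace ℝ (Fin d)) 1) ≠ 0 := (measure_ball_pos μ 0 one_pos).ne'
  have hVtop : μ (ball (0 : EuclideanSpace ℝ (Fin d)) 1) ≠ ⊤ := measure_ball_lt_top.ne
  rw [← mul_assoc] at hle
  rw [ENNReal.mul_le_mul_iff_left hV0 hVtop] at hle
  have h32 : ENNReal.ofReal ((3/2 : ℝ) ^ d)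
      = ENNReal.ofReal ((3:ℝ)^d) * ENNReal.ofReal ((2⁻¹:ℝ)^d) := by
    rw [← ENNReal.ofReal_mul (by positivity), ← mul_pow]; norm_num
  have hhalf : ENNReal.ofReal ((2⁻¹:ℝ)^d) ≠ 0 := by
    simp only [ne_eq, ENNReal.ofReal_eq_zero, not_le]; positivity
  rw [h32, ENNReal.mul_le_mul_iff_left hhalf ENNReal.ofReal_ne_top] at hle
  have h3 : ENNReal.ofReal ((3:ℝ)^d) = ((3^d : ℕ) : ℝ≥0∞) := by
    rw [← ENNReal.ofReal_natCast]; norm_num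
  rw [h3] at hle
  exact_mod_cast hle

lemma dw_geom (d m : ℕ) (hd : 0 < d) (p : Fin m → EuclideanSpace ℝ (Fin d))
    (c : EuclideanSpace ℝ (Fin d)) (hpc : ∀ a, p a ≠ c)
    (hdd : ∀ a b : Fin m, a ≠ b → dist (p a) c ≤ dist (p a) (p b)) :
    m + 1 ≤ 3 ^ d := by
  set v : Fin m → EuclideanSpace ℝ (Fin d) := fun a => p a - c with hv
  have hv0 : ∀ a, 0 < ‖v a‖ := fun a =>
    norm_pos_iff.mpr (sub_ne_zero.mpr (hpc a))
  set u : Fin m → EuclideanSpace ℝ (Fin d) := fun a => ‖v a‖⁻¹ • v a with hu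
  have hnorm : ∀ a, ‖u a‖ = 1 := by
    intro a
    rw [hu]
    simp only [norm_smul, norm_inv, norm_norm]
    exact inv_mul_cancel₀ (hv0 a).ne'
  have hI : ∀ a b : Fin m, a ≠ b → ⟪v a, v b⟫ ≤ ‖v b‖ ^ 2 / 2 := by
    intro a b hab
    have h1 : ‖v a‖ ≤ ‖v a - v b‖ := by
      have h := hdd a b hab
      rw [dist_eq_norm, dist_eq_norm] at h
      have : p a - p b = v a - v b := by rw [hv]; exact (sub_sub_sub_cancel_right _ _ _).symm
      rw [this] at h; exact h
    have h2 : ‖v a‖ ^ 2 ≤ ‖v a - v b‖ ^ 2 := by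
      have := norm_nonneg (v a)
      nlinarith
    have h3 : ‖v a - v b‖ ^ 2 = ‖v a‖ ^ 2 - 2 * ⟪v a, v b⟫ + ‖v b‖ ^ 2 :=
      norm_sub_sq_real _ _
    linarith
  apply dw_packing d m hd u hnorm
  intro a b hab
  have key : ⟪u a, u b⟫ ≤ 1 / 2 := by
    have hiu : ⟪u a, u b⟫ = ‖v a‖⁻¹ * (‖v b‖⁻¹ * ⟪v a, v b⟫) := by
      rw [hu]; simp only [real_inner_smul_left, real_inner_smul_right]; ring
    have hab' : ⟪v a, v b⟫ ≤ ‖v a‖ * ‖v b‖ / 2 := by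
      rcases le_total ‖v a‖ ‖v b‖ with hle | hle
      · have := hI b a (fun h => hab h.symm)
        rw [real_inner_comm] at this
        nlinarith [hv0 a, hv0 b]
      · have := hI a b hab
        nlinarith [hv0 a, hv0 b]
    rw [hiu, show (1:ℝ)/2 = ‖v a‖⁻¹ * (‖v b‖⁻¹ * (‖v a‖ * ‖v b‖ / 2)) by
      rw [show ‖v a‖⁻¹ * (‖v b‖⁻¹ * (‖v a‖ * ‖v b‖ / 2)) = (‖v a‖ * ‖v b‖) / (‖v a‖ * ‖v b‖) / 2 by ring,
        div_self (mul_pos (hv0 a) (hv0 b)).ne']]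
    have hb : ‖v b‖⁻¹ * ⟪v a, v b⟫ ≤ ‖v b‖⁻¹ * (‖v a‖ * ‖v b‖ / 2) :=
      mul_le_mul_of_nonneg_left hab' (by positivity)
    exact mul_le_mul_of_nonneg_left hb (by positivity)
  have hsq : 1 ≤ ‖u a - u b‖ ^ 2 := by
    rw [norm_sub_sq_real, hnorm a, hnorm b]
    nlinarith
  rw [dist_eq_norm]
  nlinarith [norm_nonneg (u a - u b)]

lemma dw_line {zi zj zj' : ℝ} (h1 : |zi - zj| ≤ |zj' - zj|) (h2 : |zi - zj'| ≤ |zj - zj'|)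
    (hij : zi ≠ zj) (hij' : zi ≠ zj') (hside : zi < zj ↔ zi < zj') : False := by
  rcases lt_or_gt_of_ne hij with h | h
  · have h' : zi < zj' := hside.mp h
    rcases abs_cases (zi - zj) with ⟨e1, f1⟩ | ⟨e1, f1⟩ <;>
    rcases abs_cases (zj' - zj) with ⟨e2, f2⟩ | ⟨e2, f2⟩ <;>
    rcases abs_cases (zi - zj') with ⟨e3, f3⟩ | ⟨e3, f3⟩ <;>
    rcases abs_cases (zj - zj') with ⟨e4, f4⟩ | ⟨e4, f4⟩ <;>
    rw [e1, e2] at h1 <;> rw [e3, e4] at h2 <;> linarith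
  · have h' : ¬ zi < zj' := fun hh => absurd (hside.mpr hh) (not_lt.mpr h.le)
    push_neg at h'
    rcases abs_cases (zi - zj) with ⟨e1, f1⟩ | ⟨e1, f1⟩ <;>
    rcases abs_cases (zj' - zj) with ⟨e2, f2⟩ | ⟨e2, f2⟩ <;>
    rcases abs_cases (zi - zj') with ⟨e3, f3⟩ | ⟨e3, f3⟩ <;>
    rcases abs_cases (zj - zj') with ⟨e4, f4⟩ | ⟨e4, f4⟩ <;>
    rw [e1, e2] at h1 <;> rw [e3, e4] at h2 <;>
    first
    | linarith
    | (exact absurd (by linarith : zi = zj') hij')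

end DWaux

theorem stmt_17
    (d n : ℕ) (X : Fin n → EuclideanSpace ℝ (Fin d)) (Z : Fin n → ℝ)
    (hZ : Function.Injective Z)
    (γd : ℕ)
    (hγd : IsGreatest
      {m : ℕ | ∃ (p : Fin m → EuclideanSpace ℝ (Fin d)) (c : EuclideanSpace ℝ (Fin d)),
        Function.Injective p ∧ (∀ a, p a ≠ c) ∧
        ∀ a b : Fin m, a ≠ b → dist (p a) c ≤ dist (p a) (p b)} γd) :
    γd ≤ 3 ^ d - 1 ∧
    ∀ i : Fin n,
      {j : Fin n | j ≠ i ∧ ∀ k : Fin n, k ≠ j → k ≠ i →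
          (dist (X i) (X j) < dist (X k) (X j) ∨
            (dist (X i) (X j) = dist (X k) (X j) ∧ |Z i - Z j| < |Z k - Z j|) ∨
            (dist (X i) (X j) = dist (X k) (X j) ∧ |Z i - Z j| = |Z k - Z j| ∧ i < k))}.ncard
        ≤ γd + 2 := by
  obtain ⟨hmem, hub⟩ := hγd
  constructor
  · obtain ⟨p, c, hinj, hpc, hdd⟩ := hmem
    rcases Nat.eq_zero_or_pos d with rfl | hd
    · by_contra h
      have ha : (0 : ℕ) < γd := by omega
      apply hpc ⟨0, ha⟩
      ext x
      exact x.elim0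
    · have := dw_geom d γd hd p c hpc hdd
      omega
  · intro i
    set S : Set (Fin n) := {j : Fin n | j ≠ i ∧ ∀ k : Fin n, k ≠ j → k ≠ i →
          (dist (X i) (X j) < dist (X k) (X j) ∨
            (dist (X i) (X j) = dist (X k) (X j) ∧ |Z i - Z j| < |Z k - Z j|) ∨
            (dist (X i) (X j) = dist (X k) (X j) ∧ |Z i - Z j| = |Z k - Z j| ∧ i < k))} with hSdef
    have hmemS : ∀ j : Fin n, j ∈ S → j ≠ i ∧ ∀ k : Fin n, k ≠ j → k ≠ i →
          (dist (X i) (X j) < dist (X k) (X j) ∨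
            (dist (X i) (X j) = dist (X k) (X j) ∧ |Z i - Z j| < |Z k - Z j|) ∨
            (dist (X i) (X j) = dist (X k) (X j) ∧ |Z i - Z j| = |Z k - Z j| ∧ i < k)) :=
      fun j hj => hj
    have hle : ∀ j ∈ S, ∀ k : Fin n, k ≠ j → k ≠ i →
        dist (X i) (X j) ≤ dist (X k) (X j) := by
      intro j hj k hkj hki
      rcases (hmemS j hj).2 k hkj hki with h | ⟨h, _⟩ | ⟨h, _, _⟩
      · exact h.le
      · exact h.le
      · exact h.le
    set S1 : Set (Fin n) := {j | j ∈ S ∧ X j ≠ X i} with hS1def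
    set S2 : Set (Fin n) := {j | j ∈ S ∧ X j = X i} with hS2def
    have hSplit : S = S1 ∪ S2 := by
      ext j
      simp only [hS1def, hS2def, Set.mem_union, Set.mem_setOf_eq]
      by_cases h : X j = X i
      · tauto
      · tauto
    have hdisj : Disjoint S1 S2 := by
      rw [Set.disjoint_left]
      rintro j ⟨_, h1⟩ ⟨_, h2⟩
      exact h1 h2
    -- S2 has at most 2 elements
    have hS2card : S2.ncard ≤ 2 := by
      have hinj2 : Set.InjOn (fun j => decide (Z i < Z j)) S2 := by
        intro j hj j' hj' he
        by_contra hne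
        have hj1 : j ∈ S := hj.1
        have hj'1 : j' ∈ S := hj'.1
        have hjXi : X j = X i := hj.2
        have hj'Xi : X j' = X i := hj'.2
        have hji : j ≠ i := (hmemS j hj1).1
        have hj'i : j' ≠ i := (hmemS j' hj'1).1
        have e1 : dist (X i) (X j) = 0 := by rw [hjXi, dist_self]
        have e2 : dist (X j') (X j) = 0 := by rw [hjXi, hj'Xi, dist_self]
        have e3 : dist (X i) (X j') = 0 := by rw [hj'Xi, dist_self]
        have e4 : dist (X j) (X j') = 0 := by rw [hjXi, hj'Xi, dist_self]
        have h1 : |Z i - Z j| ≤ |Z j' - Z j| := by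
          rcases (hmemS j hj1).2 j' (fun h => hne h.symm) hj'i with h | ⟨_, h⟩ | ⟨_, h, _⟩
          · rw [e1, e2] at h; exact absurd h (lt_irrefl 0)
          · exact h.le
          · exact h.le
        have h2 : |Z i - Z j'| ≤ |Z j - Z j'| := by
          rcases (hmemS j' hj'1).2 j (fun h => hne h) hji with h | ⟨_, h⟩ | ⟨_, h, _⟩
          · rw [e3, e4] at h; exact absurd h (lt_irrefl 0)
          · exact h.le
          · exact h.le
        exact dw_line h1 h2 (fun h => hji (hZ h).symm) (fun h => hj'i (hZ h).symm)
          (decide_eq_decide.mp he)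
      calc S2.ncard ≤ (Set.univ : Set Bool).ncard :=
            Set.ncard_le_ncard_of_injOn _ (fun a _ => Set.mem_univ _) hinj2 (Set.toFinite _)
      _ = 2 := by rw [Set.ncard_univ]; simp
    -- S1 has at most γd elements
    have hS1card : S1.ncard ≤ γd := by
      apply hub
      haveI : Fintype S1 := (Set.toFinite S1).fintype
      have hcard : Fintype.card S1 = S1.ncard := by
        rw [← Nat.card_eq_fintype_card, Nat.card_coe_set_eq]
      set e : Fin S1.ncard ≃ S1 := (Fintype.equivFinOfCardEq hcard).symm with hedef
      have hmem1 : ∀ a : Fin S1.ncard, ((e a : Fin n)) ∈ S1 := fun a => (e a).2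
      have hXne : ∀ j j', j ∈ S1 → j' ∈ S1 → j ≠ j' → X j ≠ X j' := by
        intro j j' hj hj' hne heq
        have hj'i : j' ≠ i := (hmemS j' hj'.1).1
        rcases (hmemS j hj.1).2 j' (Ne.symm hne) hj'i with h | ⟨h, _⟩ | ⟨h, _, _⟩
        · rw [← heq, dist_self] at h
          exact absurd h (not_lt.mpr dist_nonneg)
        · rw [← heq, dist_self] at h
          exact hj.2 (dist_eq_zero.mp h).symm
        · rw [← heq, dist_self] at h
          exact hj.2 (dist_eq_zero.mp h).symm
      refine ⟨fun a => X (e a), X i, ?_, ?_, ?_⟩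
      · intro a b hab
        by_contra hne
        have hne' : (e a : Fin n) ≠ (e b : Fin n) :=
          fun h => hne (e.injective.eq_iff.mp (Subtype.ext h))
        exact hXne _ _ (hmem1 a) (hmem1 b) hne' hab
      · intro a
        exact (hmem1 a).2
      · intro a b hab
        have hne' : (e b : Fin n) ≠ (e a : Fin n) := by
          intro h
          exact hab (e.injective (Subtype.ext h.symm))
        have := hle (e a) (hmem1 a).1 (e b) hne' (hmemS _ (hmem1 b).1).1
        rw [dist_comm (X i) (X (e a)), dist_comm (X (e b)) (X (e a))] at this
        exact this
    rw [hSplit, Set.ncard_union_eq hdisj (Set.toFinite _) (Set.toFinite _)]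
    omega
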